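/- Let c, c' > 0, N ∈ ℕ, d ≥ 1, M := N + d + 1, and suppose a kernel bound ‖T_{x,y}‖ ≤ c·⟨x−y⟩^{−M} holds for all x, y ∈ ℤ^d, where each T_{x,y} is a bounded operator. Then for every k ≥ 2 and all a, b ∈ ℤ^d, the (k−1)-fold lattice convolution sum Σ_{y₁,…,y_{k−1} ∈ ℤ^d} ⟨a−y₁⟩^{−M} ⟨y₁−y₂⟩^{−M} ⋯ ⟨y_{k−1}−b⟩^{−M} is bounded by (2^{N/2} c')^{k−1} ⟨a−b⟩^{−N}, where c' = sup_{|x|≤1} Σ_{y∈ℤ^d} ⟨y+x⟩^{−d−1}. -/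

import Mathlib

open Real

/-- The Japanese bracket `⟨v⟩ = (1+‖v‖²)^{1/2}`. -/
noncomputable def jb (d : ℕ) (v : EuclideanSpace ℝ (Fin d)) : ℝ :=
  (1 + ‖v‖ ^ 2) ^ ((1 : ℝ) / 2)

/-- Embedding of `ℤ^d` into Euclidean space. -/
noncomputable def toR (d : ℕ) (v : Fin d → ℤ) : EuclideanSpace ℝ (Fin d) :=
  (EuclideanSpace.equiv (Fin d) ℝ).symm fun i => (v i : ℝ)

/-- The `k`-fold lattice convolution of the weight `⟨·⟩^{-M}`: `iterK d M (k-1) a b` is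
the sum `Σ_{y₁,…,y_{k-1}} ⟨a-y₁⟩^{-M} ⟨y₁-y₂⟩^{-M} ⋯ ⟨y_{k-1}-b⟩^{-M}`. -/
noncomputable def iterK (d M : ℕ) : ℕ → (Fin d → ℤ) → (Fin d → ℤ) → ℝ
  | 0, a, b => jb d (toR d (a - b)) ^ (-(M : ℤ))
  | m + 1, a, b => ∑' y : Fin d → ℤ, iterK d M m a y * jb d (toR d (y - b)) ^ (-(M : ℤ))

namespace IterAux

lemma jb_one_le {d : ℕ} (v : EuclideanSpace ℝ (Fin d)) : 1 ≤ jb d v := by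
  have h1 : (1 : ℝ) ≤ 1 + ‖v‖ ^ 2 := le_add_of_nonneg_right (sq_nonneg _)
  calc (1 : ℝ) = 1 ^ ((1:ℝ)/2) := (Real.one_rpow _).symm
    _ ≤ (1 + ‖v‖ ^ 2) ^ ((1:ℝ)/2) := Real.rpow_le_rpow (by norm_num) h1 (by norm_num)

lemma jb_pos {d : ℕ} (v : EuclideanSpace ℝ (Fin d)) : 0 < jb d v :=
  lt_of_lt_of_le one_pos (jb_one_le v)

/-- Peetre's inequality (multiplicative form). -/
lemma peetre {d : ℕ} (u v : EuclideanSpace ℝ (Fin d)) :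
    jb d (u + v) ≤ (2 : ℝ) ^ ((1:ℝ)/2) * (jb d u * jb d v) := by
  have hn : ‖u + v‖ ≤ ‖u‖ + ‖v‖ := norm_add_le u v
  have h1 : 1 + ‖u + v‖ ^ 2 ≤ 2 * ((1 + ‖u‖ ^ 2) * (1 + ‖v‖ ^ 2)) := by
    nlinarith [norm_nonneg (u + v), norm_nonneg u, norm_nonneg v, sq_nonneg (‖u‖ - ‖v‖)]
  have h2 : jb d (u + v) ≤ (2 * ((1 + ‖u‖ ^ 2) * (1 + ‖v‖ ^ 2))) ^ ((1:ℝ)/2) :=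
    Real.rpow_le_rpow (by positivity) h1 (by norm_num)
  refine h2.trans_eq ?_
  rw [Real.mul_rpow (by norm_num) (by positivity), Real.mul_rpow (by positivity) (by positivity)]
  rfl

/-- Transfer `C ≤ t·A·B` to negative powers. -/
lemma aux_zpow {A B C t : ℝ} (hA : 0 < A) (hB : 0 < B) (hC : 0 < C) (ht : 0 < t)
    (h : C ≤ t * (A * B)) (n : ℕ) :
    A ^ (-(n : ℤ)) * B ^ (-(n : ℤ)) ≤ t ^ n * C ^ (-(n : ℤ)) := by
  rw [zpow_neg, zpow_neg, zpow_neg, zpow_natCast, zpow_natCast, zpow_natCast, ← mul_inv]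
  have hCN : C ^ n ≤ t ^ n * (A ^ n * B ^ n) := by
    calc C ^ n ≤ (t * (A * B)) ^ n := pow_le_pow_left₀ hC.le h n
      _ = t ^ n * (A ^ n * B ^ n) := by ring
  have hab : (0:ℝ) < A ^ n * B ^ n := by positivity
  have hc : (0:ℝ) < C ^ n := by positivity
  have : 1 / (A ^ n * B ^ n) ≤ t ^ n / (C ^ n) := by
    rw [div_le_div_iff₀ hab hc]; nlinarith
  calc (A ^ n * B ^ n)⁻¹ = 1 / (A ^ n * B ^ n) := (one_div _).symm
    _ ≤ t ^ n / C ^ n := this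
    _ = t ^ n * (C ^ n)⁻¹ := div_eq_mul_inv _ _

lemma rpow_half_pow (n : ℕ) : ((2:ℝ) ^ ((1:ℝ)/2)) ^ n = (2:ℝ) ^ ((n:ℝ)/2) := by
  rw [← Real.rpow_natCast ((2:ℝ) ^ ((1:ℝ)/2)) n, ← Real.rpow_mul (by norm_num)]
  ring_nf

lemma peetre_zpow {d : ℕ} (u v : EuclideanSpace ℝ (Fin d)) (n : ℕ) :
    jb d u ^ (-(n : ℤ)) * jb d v ^ (-(n : ℤ)) ≤
      (2:ℝ) ^ ((n:ℝ)/2) * jb d (u + v) ^ (-(n : ℤ)) := by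
  rw [← rpow_half_pow]
  exact aux_zpow (jb_pos u) (jb_pos v) (jb_pos (u + v)) (by positivity) (peetre u v) n

lemma toR_add {d : ℕ} (u v : Fin d → ℤ) : toR d (u + v) = toR d u + toR d v := by
  ext i
  simp [toR]

lemma norm_toR_sq {d : ℕ} (v : Fin d → ℤ) :
    ‖toR d v‖ ^ 2 = ∑ i, ((v i : ℝ)) ^ 2 := by
  rw [EuclideanSpace.norm_eq, Real.sq_sqrt (by positivity)]
  refine Finset.sum_congr rfl fun i _ => ?_
  simp [toR, Real.norm_eq_abs, sq_abs]

lemma summable_int_one_add_sq {s : ℝ} (hs : 1 < 2 * s) :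
    Summable fun n : ℤ => ((1:ℝ) + (n:ℝ) ^ 2) ^ (-s) := by
  have hb : Summable fun n : ℤ => |(n:ℝ)| ^ (-(2 * s)) := summable_abs_int_rpow hs
  have hone : Summable (fun n : ℤ => if n = 0 then (1:ℝ) else 0) := by
    apply summable_of_ne_finset_zero (s := {0})
    intro b hb
    simp only [Finset.mem_singleton] at hb
    simp [hb]
  refine Summable.of_nonneg_of_le (fun n => by positivity) (fun n => ?_) (hb.add hone)
  by_cases hn : n = 0
  · subst hn
    simp [Real.one_rpow, Real.zero_rpow (by nlinarith : -(2*s) ≠ 0)]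
  · have hn2 : (0:ℝ) < (n:ℝ) ^ 2 := by
      have : (n:ℝ) ≠ 0 := Int.cast_ne_zero.mpr hn
      positivity
    have h1 : ((1:ℝ) + (n:ℝ) ^ 2) ^ (-s) ≤ ((n:ℝ) ^ 2) ^ (-s) :=
      Real.rpow_le_rpow_of_nonpos hn2 (by linarith) (by linarith)
    have h2 : ((n:ℝ) ^ 2) ^ (-s) = |(n:ℝ)| ^ (-(2 * s)) := by
      rw [← sq_abs, ← Real.rpow_natCast |(n:ℝ)| 2, ← Real.rpow_mul (abs_nonneg _)]
      norm_num
    simp only [hn, if_neg hn]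
    rw [h2] at h1
    simpa using h1
  done

lemma summable_pi_int {n : ℕ} {g : ℤ → ℝ} (hg0 : ∀ z, 0 ≤ g z) (hg : Summable g) :
    Summable fun y : Fin n → ℤ => ∏ i, g (y i) := by
  induction n with
  | zero => exact (hasSum_fintype _).summable
  | succ n ih =>
    rw [← (Fin.consEquiv fun _ : Fin (n + 1) => ℤ).summable_iff]
    have h := hg.mul_of_nonneg ih hg0 (fun y => Finset.prod_nonneg fun i _ => hg0 _)
    refine h.congr fun p => ?_
    simp only [Fin.consEquiv, Equiv.coe_fn_mk, Function.comp_apply]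
    rw [Fin.prod_univ_succ, Fin.cons_zero]
    simp [Fin.cons_succ]

lemma summable_base (d : ℕ) (hd : 1 ≤ d) :
    Summable fun y : Fin d → ℤ => jb d (toR d y) ^ (-(d:ℤ) - 1) := by
  have hd0 : (0:ℝ) < d := by exact_mod_cast hd
  set s : ℝ := (d + 1) / (2 * d) with hs_def
  have hspos : 0 < s := by positivity
  have hs : 1 < 2 * s := by
    rw [hs_def]
    rw [mul_div_assoc']
    rw [lt_div_iff₀ (by positivity)]
    nlinarith
  have hg := summable_int_one_add_sq hs
  have hsum := summable_pi_int (n := d) (g := fun z : ℤ => ((1:ℝ) + (z:ℝ) ^ 2) ^ (-s))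
    (fun z => by positivity) hg
  refine Summable.of_nonneg_of_le (fun y => (zpow_pos (jb_pos _) _).le) (fun y => ?_) hsum
  set t : ℝ := 1 + ∑ i, ((y i : ℝ)) ^ 2 with ht_def
  have ht1 : (1:ℝ) ≤ t := le_add_of_nonneg_right (by positivity)
  have ht0 : (0:ℝ) < t := lt_of_lt_of_le one_pos ht1
  have hjb : jb d (toR d y) = t ^ ((1:ℝ)/2) := by rw [jb, norm_toR_sq]
  -- LHS as rpow of t
  have hL : jb d (toR d y) ^ (-(d:ℤ) - 1) = t ^ (-(((d:ℝ) + 1)) / 2) := by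
    rw [hjb, ← Real.rpow_intCast (t ^ ((1:ℝ)/2)) (-(d:ℤ) - 1), ← Real.rpow_mul ht0.le]
    congr 1
    push_cast
    ring
  -- RHS
  set P : ℝ := ∏ i, ((1:ℝ) + ((y i : ℝ)) ^ 2) with hP_def
  have hP0 : 0 < P := Finset.prod_pos fun i _ => by positivity
  have hPt : P ≤ t ^ (d : ℕ) := by
    have : P ≤ ∏ _i : Fin d, t := by
      refine Finset.prod_le_prod (fun i _ => by positivity) (fun i _ => ?_)
      have := Finset.single_le_sum (f := fun j => ((y j : ℝ)) ^ 2)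
        (fun j _ => sq_nonneg _) (Finset.mem_univ i)
      linarith
    simpa using this
  have hR : (∏ i, ((1:ℝ) + ((y i : ℝ)) ^ 2) ^ (-s)) = P ^ (-s) :=
    Real.finset_prod_rpow _ _ (fun i _ => by positivity) _
  rw [hL, hR]
  have h1 : (t ^ (d : ℕ)) ^ (-s) ≤ P ^ (-s) :=
    Real.rpow_le_rpow_of_nonpos hP0 hPt (by linarith)
  have h2 : (t ^ (d : ℕ)) ^ (-s) = t ^ (-(((d:ℝ) + 1)) / 2) := by
    rw [← Real.rpow_natCast t d, ← Real.rpow_mul ht0.le]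
    congr 1
    rw [hs_def]
    field_simp
  rw [← h2]
  exact h1

lemma summable_shift (d : ℕ) (hd : 1 ≤ d) (b : Fin d → ℤ) :
    Summable fun y : Fin d → ℤ => jb d (toR d (y - b)) ^ (-(d:ℤ) - 1) :=
  ((Equiv.subRight b).summable_iff
    (f := fun y : Fin d → ℤ => jb d (toR d y) ^ (-(d:ℤ) - 1))).mpr (summable_base d hd)

lemma tsum_shift (d : ℕ) (b : Fin d → ℤ) :
    ∑' y : Fin d → ℤ, jb d (toR d (y - b)) ^ (-(d:ℤ) - 1)
      = ∑' y : Fin d → ℤ, jb d (toR d y) ^ (-(d:ℤ) - 1) :=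
  (Equiv.subRight b).tsum_eq (f := fun y : Fin d → ℤ => jb d (toR d y) ^ (-(d:ℤ) - 1))

end IterAux

/-- Iterated lattice sums of weights decaying at order `M = N + d + 1` decay at rate `N`,
with constant `(2^{N/2} c')^{k-1}` where `c' = sup_{|x|≤1} Σ_{y∈ℤ^d} ⟨y+x⟩^{-d-1}`. -/
theorem iterated_lattice_sum_decay {H : Type*} [NormedAddCommGroup H] [NormedSpace ℂ H]
    (d N : ℕ) (hd : 1 ≤ d) (M : ℕ) (hM : M = N + d + 1)
    (c : ℝ) (hc : 0 < c) (T : (Fin d → ℤ) → (Fin d → ℤ) → H →L[ℂ] H)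
    (hT : ∀ x y : Fin d → ℤ, ‖T x y‖ ≤ c * jb d (toR d (x - y)) ^ (-(M : ℤ)))
    (c' : ℝ)
    (hc' : c' = ⨆ x ∈ Metric.closedBall (0 : EuclideanSpace ℝ (Fin d)) 1,
      ∑' y : Fin d → ℤ, jb d (toR d y + x) ^ (-(d : ℤ) - 1))
    (k : ℕ) (hk : 2 ≤ k) (a b : Fin d → ℤ) :
    iterK d M (k - 1) a b ≤
      ((2 : ℝ) ^ ((N : ℝ) / 2) * c') ^ (k - 1) * jb d (toR d (a - b)) ^ (-(N : ℤ)) := by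
  clear hT T hc c hk
  open IterAux in
  -- abbreviations
  set S : ℝ := ∑' y : Fin d → ℤ, jb d (toR d y) ^ (-(d:ℤ) - 1) with hS_def
  set F : EuclideanSpace ℝ (Fin d) → ℝ :=
    fun x => ∑' y : Fin d → ℤ, jb d (toR d y + x) ^ (-(d:ℤ) - 1) with hF_def
  have hS0 : 0 ≤ S := tsum_nonneg fun y => (zpow_pos (IterAux.jb_pos _) _).le
  -- bound on F over the closed ball
  have hFball : ∀ x ∈ Metric.closedBall (0 : EuclideanSpace ℝ (Fin d)) 1,
      F x ≤ 2 ^ (d + 1) * S := by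
    intro x hx
    have hxn : ‖x‖ ≤ 1 := by simpa [Metric.mem_closedBall] using hx
    have hjx : jb d (-x) ≤ (2:ℝ) ^ ((1:ℝ)/2) := by
      have h1 : 1 + ‖(-x : EuclideanSpace ℝ (Fin d))‖ ^ 2 ≤ 2 := by
        rw [norm_neg]; nlinarith [norm_nonneg x]
      have h2 : ((1:ℝ) + ‖(-x : EuclideanSpace ℝ (Fin d))‖ ^ 2) ^ ((1:ℝ)/2)
          ≤ (2:ℝ) ^ ((1:ℝ)/2) :=
        Real.rpow_le_rpow (by positivity) h1 (by norm_num)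
      simpa [jb] using h2
    have hterm : ∀ y : Fin d → ℤ,
        jb d (toR d y + x) ^ (-(d:ℤ) - 1) ≤ 2 ^ (d + 1) * jb d (toR d y) ^ (-(d:ℤ) - 1) := by
      intro y
      have hC : jb d (toR d y) ≤ 2 * (jb d (toR d y + x) * 1) := by
        have h1 : jb d (toR d y) = jb d ((toR d y + x) + (-x)) := by
          congr 1; abel
        have h2 := IterAux.peetre (toR d y + x) (-x)
        have h3 : (2:ℝ) ^ ((1:ℝ)/2) * ((2:ℝ) ^ ((1:ℝ)/2)) = 2 := by
          rw [← Real.rpow_add (by norm_num)]; norm_num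
        have h4 : (2:ℝ) ^ ((1:ℝ)/2) * (jb d (toR d y + x) * jb d (-x))
            ≤ 2 * (jb d (toR d y + x) * 1) := by
          have tpos : (0:ℝ) < (2:ℝ) ^ ((1:ℝ)/2) := Real.rpow_pos_of_pos two_pos _
          have hb := IterAux.jb_pos (toR d y + x)
          nlinarith [mul_le_mul_of_nonneg_left hjx (mul_pos tpos hb).le]
        rw [h1]; exact h2.trans h4
      have haux := IterAux.aux_zpow (IterAux.jb_pos (toR d y + x)) one_pos
        (IterAux.jb_pos (toR d y)) two_pos hC (d + 1)
      have he : -((d + 1 : ℕ) : ℤ) = -(d:ℤ) - 1 := by push_cast; ring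
      rw [he, one_zpow, mul_one] at haux
      exact haux
    have hgsum : Summable fun y : Fin d → ℤ =>
        (2:ℝ) ^ (d + 1) * jb d (toR d y) ^ (-(d:ℤ) - 1) :=
      (IterAux.summable_base d hd).mul_left _
    have hfsum : Summable fun y : Fin d → ℤ => jb d (toR d y + x) ^ (-(d:ℤ) - 1) :=
      hgsum.of_nonneg_of_le (fun y => (zpow_pos (IterAux.jb_pos _) _).le) hterm
    calc F x ≤ ∑' y : Fin d → ℤ, (2:ℝ) ^ (d + 1) * jb d (toR d y) ^ (-(d:ℤ) - 1) :=
          Summable.tsum_le_tsum hterm hfsum hgsum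
      _ = 2 ^ (d + 1) * S := tsum_mul_left
  -- c' bounds
  have hBdd : BddAbove (Set.range fun x : EuclideanSpace ℝ (Fin d) =>
      ⨆ _ : x ∈ Metric.closedBall (0 : EuclideanSpace ℝ (Fin d)) 1, F x) := by
    refine ⟨2 ^ (d + 1) * S, ?_⟩
    rintro _ ⟨x, rfl⟩
    dsimp only
    by_cases hx : x ∈ Metric.closedBall (0 : EuclideanSpace ℝ (Fin d)) 1
    · rw [ciSup_pos hx]; exact hFball x hx
    · haveI : IsEmpty (x ∈ Metric.closedBall (0 : EuclideanSpace ℝ (Fin d)) 1) :=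
        isEmpty_Prop.mpr hx
      rw [Real.iSup_of_isEmpty]
      positivity
  have hSc' : S ≤ c' := by
    rw [hc']
    have h0 : (0 : EuclideanSpace ℝ (Fin d)) ∈
        Metric.closedBall (0 : EuclideanSpace ℝ (Fin d)) 1 :=
      Metric.mem_closedBall_self (by norm_num)
    have hF0 : S = F 0 := by
      rw [hF_def]; simp [hS_def]
    calc S = F 0 := hF0
      _ = ⨆ _ : (0 : EuclideanSpace ℝ (Fin d)) ∈
            Metric.closedBall (0 : EuclideanSpace ℝ (Fin d)) 1, F 0 :=
          (ciSup_pos (f := fun _ => F 0) h0).symm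
      _ ≤ _ := le_ciSup hBdd 0
  have hc'0 : 0 ≤ c' := hS0.trans hSc'
  set C : ℝ := (2:ℝ) ^ ((N:ℝ)/2) * c' with hC_def
  have hC0 : 0 ≤ C := mul_nonneg (Real.rpow_nonneg (by norm_num) _) hc'0
  -- nonnegativity of iterK
  have hIK : ∀ m (a b : Fin d → ℤ), 0 ≤ iterK d M m a b := by
    intro m
    induction m with
    | zero => intro a b; exact (zpow_pos (IterAux.jb_pos _) _).le
    | succ m ih =>
      intro a b
      exact tsum_nonneg fun y => mul_nonneg (ih a y) (zpow_pos (IterAux.jb_pos _) _).le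
  -- main induction
  have key : ∀ m (a b : Fin d → ℤ),
      iterK d M m a b ≤ C ^ m * jb d (toR d (a - b)) ^ (-(N:ℤ)) := by
    intro m
    induction m with
    | zero =>
      intro a b
      show jb d (toR d (a - b)) ^ (-(M : ℤ)) ≤ _
      rw [pow_zero, one_mul]
      refine zpow_le_zpow_right₀ (IterAux.jb_one_le _) ?_
      omega
    | succ m ih =>
      intro a b
      have hsplit : ∀ y : Fin d → ℤ, jb d (toR d (y - b)) ^ (-(M:ℤ))
          = jb d (toR d (y - b)) ^ (-(N:ℤ)) * jb d (toR d (y - b)) ^ (-(d:ℤ) - 1) := by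
        intro y
        rw [← zpow_add₀ (IterAux.jb_pos _).ne']
        congr 1
        rw [hM]; push_cast; ring
      set K : ℝ := (2:ℝ) ^ ((N:ℝ)/2) * jb d (toR d (a - b)) ^ (-(N:ℤ)) with hK_def
      have hK0 : 0 ≤ K :=
        mul_nonneg (Real.rpow_nonneg (by norm_num) _) (zpow_pos (IterAux.jb_pos _) _).le
      have hterm : ∀ y : Fin d → ℤ,
          iterK d M m a y * jb d (toR d (y - b)) ^ (-(M:ℤ))
            ≤ C ^ m * K * jb d (toR d (y - b)) ^ (-(d:ℤ) - 1) := by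
        intro y
        rw [hsplit y]
        have pe : jb d (toR d (a - y)) ^ (-(N:ℤ)) * jb d (toR d (y - b)) ^ (-(N:ℤ)) ≤ K := by
          have h := IterAux.peetre_zpow (toR d (a - y)) (toR d (y - b)) N
          rwa [← IterAux.toR_add, sub_add_sub_cancel] at h
        have h1 : iterK d M m a y * (jb d (toR d (y - b)) ^ (-(N:ℤ))
              * jb d (toR d (y - b)) ^ (-(d:ℤ) - 1))
            ≤ (C ^ m * jb d (toR d (a - y)) ^ (-(N:ℤ)))
              * (jb d (toR d (y - b)) ^ (-(N:ℤ)) * jb d (toR d (y - b)) ^ (-(d:ℤ) - 1)) := by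
          refine mul_le_mul_of_nonneg_right (ih a y) ?_
          exact mul_nonneg (zpow_pos (IterAux.jb_pos _) _).le (zpow_pos (IterAux.jb_pos _) _).le
        refine h1.trans ?_
        have h2 : (C ^ m * jb d (toR d (a - y)) ^ (-(N:ℤ)))
              * (jb d (toR d (y - b)) ^ (-(N:ℤ)) * jb d (toR d (y - b)) ^ (-(d:ℤ) - 1))
            = C ^ m * ((jb d (toR d (a - y)) ^ (-(N:ℤ)) * jb d (toR d (y - b)) ^ (-(N:ℤ)))
              * jb d (toR d (y - b)) ^ (-(d:ℤ) - 1)) := by ring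
        rw [h2, (by ring : C ^ m * K * jb d (toR d (y - b)) ^ (-(d:ℤ) - 1)
          = C ^ m * (K * jb d (toR d (y - b)) ^ (-(d:ℤ) - 1)))]
        refine mul_le_mul_of_nonneg_left ?_ (pow_nonneg hC0 m)
        exact mul_le_mul_of_nonneg_right pe (zpow_pos (IterAux.jb_pos _) _).le
      have hgsum : Summable fun y : Fin d → ℤ =>
          C ^ m * K * jb d (toR d (y - b)) ^ (-(d:ℤ) - 1) :=
        (IterAux.summable_shift d hd b).mul_left _
      have hfsum : Summable fun y : Fin d → ℤ =>
          iterK d M m a y * jb d (toR d (y - b)) ^ (-(M:ℤ)) :=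
        hgsum.of_nonneg_of_le
          (fun y => mul_nonneg (hIK m a y) (zpow_pos (IterAux.jb_pos _) _).le) hterm
      calc iterK d M (m+1) a b
          = ∑' y : Fin d → ℤ, iterK d M m a y * jb d (toR d (y - b)) ^ (-(M:ℤ)) := rfl
        _ ≤ ∑' y : Fin d → ℤ, C ^ m * K * jb d (toR d (y - b)) ^ (-(d:ℤ) - 1) :=
            Summable.tsum_le_tsum hterm hfsum hgsum
        _ = C ^ m * K * S := by rw [tsum_mul_left, IterAux.tsum_shift d b]
        _ ≤ C ^ m * K * c' :=
            mul_le_mul_of_nonneg_left hSc' (mul_nonneg (pow_nonneg hC0 m) hK0)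
        _ = C ^ (m+1) * jb d (toR d (a - b)) ^ (-(N:ℤ)) := by
            rw [hK_def, hC_def, pow_succ]; ring
  exact key (k - 1) a b
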